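/- Let n ≥ 1 and let d be a positive divisor of n. In the ring R(n) = ℤ[X]/(X^n − 1), the kernel of the natural ring homomorphism R(n) → ∏_{d' ∣ n, d' ≠ d} ℤ[X]/(Φ_{d'}) (induced by the quotient maps ℤ[X] → ℤ[X]/(Φ_{d'})) is the principal ideal of R(n) generated by the class of (X^n − 1)/Φ_d = ∏_{d' ∣ n, d' ≠ d} Φ_{d'}. -/

import Mathlib

open Polynomial

lemma cyclo_prime {k : ℕ} (hk : 0 < k) : Prime (cyclotomic k ℤ) :=
  (cyclotomic.irreducible hk).prime

lemma prod_cyclo_dvd (s : Finset ℕ) (hs : 0 ∉ s) (f : Polynomial ℤ)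
    (h : ∀ k ∈ s, cyclotomic k ℤ ∣ f) : (∏ k ∈ s, cyclotomic k ℤ) ∣ f := by
  induction s using Finset.induction_on with
  | empty => simp
  | @insert a s ha ih =>
    have hQ : (∏ k ∈ s, cyclotomic k ℤ) ∣ f :=
      ih (fun h0 => hs (Finset.mem_insert_of_mem h0)) fun k hk => h k (Finset.mem_insert_of_mem hk)
    obtain ⟨g, hg⟩ := hQ
    have ha0 : 0 < a := Nat.pos_of_ne_zero fun h0 => hs (h0 ▸ Finset.mem_insert_self a s)
    have hpa := cyclo_prime ha0
    have hdvd : cyclotomic a ℤ ∣ (∏ k ∈ s, cyclotomic k ℤ) * g := hg ▸ h a (Finset.mem_insert_self a s)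
    have : cyclotomic a ℤ ∣ g := by
      rcases hpa.dvd_mul.mp hdvd with hc | hc
      · exfalso
        obtain ⟨k, hk, hdk⟩ := (hpa.dvd_finset_prod_iff _).mp hc
        have hk0 : 0 < k := Nat.pos_of_ne_zero fun h0 => hs (h0 ▸ Finset.mem_insert_of_mem hk)
        have : cyclotomic a ℤ = cyclotomic k ℤ :=
          eq_of_monic_of_associated (cyclotomic.monic a ℤ) (cyclotomic.monic k ℤ)
            (associated_of_dvd_dvd hdk ((cyclotomic.irreducible ha0).dvd_symm
              (cyclotomic.irreducible hk0) hdk))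
        exact ha (cyclotomic_injective this ▸ hk)
      · exact hc
    obtain ⟨g', hg'⟩ := this
    rw [Finset.prod_insert ha]
    exact ⟨g', by rw [hg, hg', mul_left_comm, mul_assoc]⟩

/-- The natural ring homomorphism `R(n) = ℤ[X]/(Xⁿ-1) → ∏_{d' ∣ n, d' ≠ d} ℤ[X]/(Φ_{d'})`
induced by the quotient maps. -/
noncomputable def toProdCyclotomicQuot (n d : ℕ) (hn : 0 < n) :
    (Polynomial ℤ ⧸ Ideal.span {(X : Polynomial ℤ) ^ n - 1}) →+*
      ∀ d' : {d' : ℕ // d' ∈ n.divisors.erase d},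
        Polynomial ℤ ⧸ Ideal.span {cyclotomic d'.1 ℤ} :=
  Pi.ringHom fun d' =>
    Ideal.Quotient.factor (S := Ideal.span {(X : Polynomial ℤ) ^ n - 1})
      (T := Ideal.span {cyclotomic d'.1 ℤ})
      (Ideal.span_singleton_le_span_singleton.mpr
        ((Finset.dvd_prod_of_mem (fun i => cyclotomic i ℤ)
            (Finset.mem_of_mem_erase d'.2)).trans
          (dvd_of_eq (prod_cyclotomic_eq_X_pow_sub_one hn ℤ))))

/-- Proposition 3.5 (2): for `d ∣ n`, the kernel of the natural map
`R(n) → ∏_{d' ∣ n, d' ≠ d} R_{d'}` is the principal ideal of `R(n)` generated by the class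
of `(Xⁿ - 1)/Φ_d = ∏_{d' ∣ n, d' ≠ d} Φ_{d'}`. -/
theorem ker_toProdCyclotomicQuot (n d : ℕ) (hn : 0 < n) (hd : d ∈ n.divisors) :
    RingHom.ker (toProdCyclotomicQuot n d hn) =
      Ideal.span {Ideal.Quotient.mk (Ideal.span {(X : Polynomial ℤ) ^ n - 1})
        (∏ d' ∈ n.divisors.erase d, cyclotomic d' ℤ)} := by
  have hfac : (X : Polynomial ℤ) ^ n - 1 =
      cyclotomic d ℤ * ∏ d' ∈ n.divisors.erase d, cyclotomic d' ℤ := by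
    rw [← prod_cyclotomic_eq_X_pow_sub_one hn ℤ,
      ← Finset.mul_prod_erase n.divisors (fun i => cyclotomic i ℤ) hd]
  ext x
  obtain ⟨f, rfl⟩ := Ideal.Quotient.mk_surjective x
  rw [RingHom.mem_ker, Ideal.mem_span_singleton]
  constructor
  · intro hx
    have hall : ∀ k ∈ n.divisors.erase d, cyclotomic k ℤ ∣ f := by
      intro k hk
      have h1 := congrFun hx ⟨k, hk⟩
      simp only [toProdCyclotomicQuot, Pi.ringHom, Pi.ringHom_apply, Ideal.Quotient.factor_mk,
        Pi.zero_apply] at h1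
      exact (Ideal.mem_span_singleton).mp (Ideal.Quotient.eq_zero_iff_mem.mp h1)
    have : 0 ∉ n.divisors.erase d := fun h0 =>
      (Nat.pos_of_mem_divisors (Finset.mem_of_mem_erase h0)).ne' rfl
    obtain ⟨g, hg⟩ := prod_cyclo_dvd _ this f hall
    exact ⟨Ideal.Quotient.mk _ g, by rw [hg]; simp⟩
  · rintro ⟨c, hc⟩
    obtain ⟨g, rfl⟩ := Ideal.Quotient.mk_surjective c
    rw [← map_mul, Ideal.Quotient.mk_eq_mk_iff_sub_mem, Ideal.mem_span_singleton] at hc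
    obtain ⟨h, hh⟩ := hc
    have hpdvd : (∏ d' ∈ n.divisors.erase d, cyclotomic d' ℤ) ∣ f := by
      refine ⟨g + cyclotomic d ℤ * h, ?_⟩
      have : f = (∏ d' ∈ n.divisors.erase d, cyclotomic d' ℤ) * g + ((X:Polynomial ℤ)^n - 1) * h := by
        linear_combination hh
      rw [this, hfac]; ring
    funext d'
    simp only [toProdCyclotomicQuot, Pi.ringHom, Pi.ringHom_apply, Ideal.Quotient.factor_mk, Pi.zero_apply]
    exact Ideal.Quotient.eq_zero_iff_mem.mpr (Ideal.mem_span_singleton.mpr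
      ((Finset.dvd_prod_of_mem (fun i => cyclotomic i ℤ) d'.2).trans hpdvd))
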